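/- Let G be a finite group, N ⊴ G a normal subgroup, and p a prime number. Let φ be an irreducible complex character of N that is G-invariant and such that φ(1)·o(φ) is a power of p. If p does not divide the order of the Schur multiplier M(G/N), then φ extends to an irreducible character of G, i.e., there exists χ ∈ Irr(G) whose restriction to N equals φ. -/

import Mathlib

open CategoryTheory

/-- The group of `2`-cocycles of `S` with values in `ℂˣ` (trivial action). -/
def twoCocycles (S : Type*) [Group S] : Subgroup (S × S → ℂˣ) where
  carrier := {f | ∀ a b c : S, f (a, b) * f (a * b, c) = f (b, c) * f (a, b * c)}
  one_mem' := by intro a b c; simp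
  mul_mem' := by
    intro f g hf hg a b c
    simp only [Pi.mul_apply]
    rw [mul_mul_mul_comm, hf a b c, hg a b c, mul_mul_mul_comm]
  inv_mem' := by
    intro f hf a b c
    simp only [Pi.inv_apply]
    rw [← mul_inv, hf a b c, mul_inv]

/-- The group of `2`-coboundaries of `S` with values in `ℂˣ` (trivial action). -/
def twoCoboundaries (S : Type*) [Group S] : Subgroup (S × S → ℂˣ) where
  carrier := {f | ∃ g : S → ℂˣ, ∀ a b : S, f (a, b) = g a * g b * (g (a * b))⁻¹}
  one_mem' := ⟨1, by intro a b; simp⟩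
  mul_mem' := by
    rintro f f' ⟨g, hg⟩ ⟨g', hg'⟩
    refine ⟨g * g', fun a b => ?_⟩
    simp only [Pi.mul_apply, mul_inv, hg a b, hg' a b]
    ac_rfl
  inv_mem' := by
    rintro f ⟨g, hg⟩
    refine ⟨g⁻¹, fun a b => ?_⟩
    simp only [Pi.inv_apply, hg a b, mul_inv, inv_inv]

/-- The Schur multiplier of `S`, identified with `H²(S, ℂˣ)` for the trivial action:
`2`-cocycles modulo `2`-coboundaries. -/
def schurMultiplier (S : Type*) [Group S] : Type _ :=
  ↥(twoCocycles S) ⧸ (twoCoboundaries S).subgroupOf (twoCocycles S)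

/-- The determinantal order `o(χ)` of the character of a representation `V` :
the order of the linear character `det ∘ ρ` in the group of linear characters. -/
noncomputable def charDetOrder {G : Type} [Group G] (V : FDRep ℂ G) : ℕ :=
  orderOf ((LinearMap.det : (V →ₗ[ℂ] V) →* ℂ).comp V.ρ)

instance schurMultiplier.instGroup (S : Type*) [Group S] : Group (schurMultiplier S) :=
  inferInstanceAs (Group (↥(twoCocycles S) ⧸ (twoCoboundaries S).subgroupOf (twoCocycles S)))

namespace Ext1
variable {H : Type} [Group H]

/-- Build a morphism in `FDRep ℂ H` from an equivariant linear map. -/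
def mkHom {X Y : FDRep ℂ H} (f : X →ₗ[ℂ] Y)
    (hf : ∀ h : H, f.comp (X.ρ h) = (Y.ρ h).comp f) : X ⟶ Y :=
  ⟨ConcreteCategory.ofHom (C := FGModuleCat ℂ) f, fun h => by
    ext x; exact LinearMap.congr_fun (hf h) x⟩

lemma hom_ext {X Y : FDRep ℂ H} {η θ : X ⟶ Y} (h : ∀ x : X, η.hom x = θ.hom x) : η = θ := by
  apply Action.Hom.ext; ext x; exact h x

lemma zero_hom_apply {X Y : FDRep ℂ H} (x : X) : ((0 : X ⟶ Y)).hom x = 0 := by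
  rw [Action.zero_hom]; rfl

lemma zero_V_apply {X Y : FDRep ℂ H} (x : X) :
    ConcreteCategory.hom (0 : X.V ⟶ Y.V) x = 0 := rfl

/-- The underlying linear map of a morphism. -/
def homL {X Y : FDRep ℂ H} (η : X ⟶ Y) : X →ₗ[ℂ] Y := ConcreteCategory.hom η.hom

lemma hom_comm {X Y : FDRep ℂ H} (η : X ⟶ Y) (h : H) (x : X) :
    η.hom (X.ρ h x) = Y.ρ h (η.hom x) :=
  congrFun (congrArg (fun (g : X.V ⟶ Y.V) => (g : X → Y)) (η.comm h)) x

/-- The subrepresentation on an invariant submodule. -/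
noncomputable def subRep (X : FDRep ℂ H) (W : Submodule ℂ X)
    (hW : ∀ (h : H) (x : X), x ∈ W → X.ρ h x ∈ W) : FDRep ℂ H :=
  FDRep.of
    { toFun := fun h => (X.ρ h).restrict (fun x hx => hW h x hx)
      map_one' := by ext x; simp
      map_mul' := fun g h => by ext x; simp }

noncomputable def subRepι (X : FDRep ℂ H) (W : Submodule ℂ X) (hW) :
    subRep X W hW ⟶ X :=
  mkHom (W.subtype) (fun h => by ext x; rfl)

lemma subRepι_apply (X : FDRep ℂ H) (W : Submodule ℂ X) (hW) (x : W) :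
    (subRepι X W hW).hom x = (x : X) := rfl

lemma mono_of_injective {X Y : FDRep ℂ H} (η : X ⟶ Y)
    (hη : Function.Injective η.hom) : Mono η := by
  constructor
  intro Z u v huv
  refine hom_ext (fun x => hη ?_)
  calc η.hom (u.hom x) = (u ≫ η).hom x := rfl
    _ = (v ≫ η).hom x := by rw [huv]
    _ = η.hom (v.hom x) := rfl

lemma injective_of_mono {X Y : FDRep ℂ H} (η : X ⟶ Y) [Mono η] :
    Function.Injective η.hom := by
  have : Function.Injective (homL η) := by
    rw [← LinearMap.ker_eq_bot (f := homL η)]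
    set K := LinearMap.ker (homL η) with hK
    have hKinv : ∀ (h : H) (x : X), x ∈ K → X.ρ h x ∈ K := by
      intro h x hx
      have h1 : η.hom x = 0 := hx
      show homL η (X.ρ h x) = 0
      show η.hom (X.ρ h x) = 0
      rw [hom_comm, h1, map_zero]
    have h0 : subRepι X K hKinv = 0 := by
      rw [← cancel_mono η]
      refine hom_ext (fun x => ?_)
      have hx : η.hom ((subRepι X K hKinv).hom x) = 0 := (show K from x).2
      show η.hom ((subRepι X K hKinv).hom x) = η.hom ((0 : subRep X K hKinv ⟶ X).hom x)
      rw [zero_hom_apply, map_zero, hx]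
    ext x
    simp only [Submodule.mem_bot]
    constructor
    · intro hx
      have := congrArg (fun (θ : subRep X K hKinv ⟶ X) => θ.hom ⟨x, hx⟩) h0
      exact this.trans (zero_hom_apply _)
    · rintro rfl; exact K.zero_mem
  exact this

lemma isIso_of_bijective {X Y : FDRep ℂ H} (η : X ⟶ Y)
    (hη : Function.Bijective η.hom) : IsIso η := by
  have hη' : Function.Bijective (homL η) := hη
  let e := LinearEquiv.ofBijective (homL η) hη'
  refine ⟨mkHom ((e.symm : Y →ₗ[ℂ] X)) (fun h => ?_), hom_ext fun x => ?_, hom_ext fun y => ?_⟩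
  · ext y
    apply hη'.injective
    show η.hom (e.symm (Y.ρ h y)) = η.hom (X.ρ h (e.symm y))
    rw [hom_comm]
    have h1 : η.hom (e.symm (Y.ρ h y)) = Y.ρ h y := e.apply_symm_apply _
    have h2 : η.hom (e.symm y) = y := e.apply_symm_apply _
    rw [h1, h2]
  · show e.symm (η.hom x) = x
    exact e.symm_apply_apply x
  · show η.hom (e.symm y) = y
    exact e.apply_symm_apply y

def IsIrred (X : FDRep ℂ H) : Prop :=
  ∀ W : Submodule ℂ X, (∀ (h : H) (x : X), x ∈ W → X.ρ h x ∈ W) → W = ⊥ ∨ W = ⊤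

lemma nontrivial_of_simple (X : FDRep ℂ H) [Simple X] : Nontrivial X := by
  by_contra h
  have hs : Subsingleton X := not_nontrivial_iff_subsingleton.mp h
  have hs2 : ∀ a b : X, a = b := fun a b => Subsingleton.elim a b
  exact id_nonzero X (hom_ext (fun x => hs2 _ _))

lemma isIrred_of_simple (X : FDRep ℂ H) [Simple X] : IsIrred X := by
  intro W hW
  by_cases hbot : W = ⊥
  · exact Or.inl hbot
  refine Or.inr ?_
  obtain ⟨w, hw, hw0⟩ := Submodule.exists_mem_ne_zero_of_ne_bot hbot
  have hmono : Mono (subRepι X W hW) := mono_of_injective _ (fun a b hab => Subtype.ext hab)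
  have hne : subRepι X W hW ≠ 0 := by
    intro h0
    apply hw0
    have := congrArg (fun (θ : subRep X W hW ⟶ X) => θ.hom ⟨w, hw⟩) h0
    exact this.trans (zero_hom_apply _)
  have hiso : IsIso (subRepι X W hW) := isIso_of_mono_of_nonzero hne
  rw [Submodule.eq_top_iff']
  intro x
  have : (subRepι X W hW).hom ((inv (subRepι X W hW)).hom x) = x := by
    have := congrArg (fun (θ : X ⟶ X) => θ.hom x) (IsIso.inv_hom_id (subRepι X W hW))
    exact this
  rw [← this]
  exact ((inv (subRepι X W hW)).hom x : W).2

lemma simple_of_isIrred (X : FDRep ℂ H) (hnt : Nontrivial X) (hX : IsIrred X) : Simple X := by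
  constructor
  intro Y f hmono
  constructor
  · intro hiso h0
    obtain ⟨x, hx⟩ := exists_ne (0 : X)
    apply hx
    have h1 : inv f ≫ f = 𝟙 X := IsIso.inv_hom_id f
    have h2 : inv f ≫ f = inv f ≫ 0 := congrArg (fun θ => inv f ≫ θ) h0
    rw [Limits.comp_zero] at h2
    rw [h2] at h1
    have := congrArg (fun (θ : X ⟶ X) => θ.hom x) h1
    simpa [zero_hom_apply, zero_V_apply] using this.symm
  · intro hne
    have hinj : Function.Injective f.hom := injective_of_mono f
    have hWinv : ∀ (h : H) (x : X), x ∈ LinearMap.range (homL f) →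
        X.ρ h x ∈ LinearMap.range (homL f) := by
      rintro h x ⟨y, rfl⟩
      exact ⟨Y.ρ h y, hom_comm f h y⟩
    rcases hX (LinearMap.range (homL f)) hWinv with hbot | htop
    · exfalso
      apply hne
      refine hom_ext (fun y => ?_)
      have : homL f y ∈ LinearMap.range (homL f) := ⟨y, rfl⟩
      rw [hbot] at this
      exact ((Submodule.mem_bot ℂ).mp this).trans (zero_hom_apply _).symm
    · exact isIso_of_bijective f ⟨hinj, LinearMap.range_eq_top.mp htop⟩

lemma exists_scalar (X : FDRep ℂ H) [Simple X] (f : X →ₗ[ℂ] X)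
    (hf : ∀ h : H, f.comp (X.ρ h) = (X.ρ h).comp f) : ∃ c : ℂ, f = c • LinearMap.id := by
  have h1 : Module.finrank ℂ (X ⟶ X) = 1 := by
    rw [FDRep.finrank_hom_simple_simple X X, if_pos ⟨Iso.refl X⟩]
  obtain ⟨c, hc⟩ := (finrank_eq_one_iff_of_nonzero' (𝟙 X) (id_nonzero X)).mp h1 (mkHom f hf)
  refine ⟨c, LinearMap.ext fun x => ?_⟩
  have h3 : (c • 𝟙 X).hom x = (mkHom f hf).hom x := congrArg (fun (θ : X ⟶ X) => θ.hom x) hc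
  have h4 : (c • 𝟙 X).hom x = c • x := by
    rw [Action.smul_hom]; rfl
  have h5 : (mkHom f hf).hom x = f x := rfl
  rw [h4, h5] at h3
  simpa using h3.symm

lemma iso_of_char_eq {V W : FDRep ℂ H} [Finite H] [Simple V] [Simple W]
    (h : ∀ x : H, V.character x = W.character x) : Nonempty (V ≅ W) := by
  classical
  letI : Fintype H := Fintype.ofFinite H
  letI : Invertible ((Nat.card H : ℂ)) :=
    invertibleOfNonzero (Nat.cast_ne_zero.mpr Nat.card_pos.ne')
  have key := FDRep.char_orthonormal (k := ℂ) (G := H) V W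
  have key2 := FDRep.char_orthonormal (k := ℂ) (G := H) W W
  rw [if_pos ⟨Iso.refl W⟩] at key2
  by_contra hne
  rw [if_neg hne] at key
  have hchar : V.character = W.character := funext h
  rw [hchar] at key
  rw [key] at key2
  exact zero_ne_one key2

/-- Rep composed with a group endomorphism. -/
noncomputable def conjRep (X : FDRep ℂ H) (c : H →* H) : FDRep ℂ H := FDRep.of (X.ρ.comp c)

lemma conjRep_ρ (X : FDRep ℂ H) (c : H →* H) (h : H) :
    (conjRep X c).ρ h = X.ρ (c h) := rfl

lemma conjRep_char (X : FDRep ℂ H) (c : H →* H) (h : H) :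
    (conjRep X c).character h = X.character (c h) := rfl

/-- The equivariant equivalence underlying an isomorphism with a conjugate rep. -/
noncomputable def interEquiv {X : FDRep ℂ H} {c : H →* H} (i : X ≅ conjRep X c) :
    (X : Type) ≃ₗ[ℂ] (X : Type) :=
  @FDRep.isoToLinearEquiv ℂ H _ _ X (conjRep X c) i

/-- The inverse of the intertwiner, as a unit of the endomorphism monoid. -/
noncomputable def inter {X : FDRep ℂ H} {c : H →* H} (i : X ≅ conjRep X c) :
    ((X : Type) →ₗ[ℂ] (X : Type))ˣ where
  val := (interEquiv i).symm.toLinearMap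
  inv := (interEquiv i).toLinearMap
  val_inv := LinearMap.ext fun x => (interEquiv i).symm_apply_apply x
  inv_val := LinearMap.ext fun x => (interEquiv i).apply_symm_apply x

lemma interEquiv_comm {X : FDRep ℂ H} {c : H →* H} (i : X ≅ conjRep X c) (h : H) (x : X) :
    interEquiv i (X.ρ h x) = X.ρ (c h) (interEquiv i x) := by
  have := hom_comm i.hom h x
  exact this

lemma inter_comm {X : FDRep ℂ H} {c : H →* H} (i : X ≅ conjRep X c) (h : H) :
    (inter i).val * X.ρ (c h) = X.ρ h * (inter i).val := by
  ext x
  show (interEquiv i).symm (X.ρ (c h) x) = X.ρ h ((interEquiv i).symm x)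
  apply (interEquiv i).injective
  rw [(interEquiv i).apply_symm_apply, interEquiv_comm, (interEquiv i).apply_symm_apply]

/-- Scalar units inside the unit group of the endomorphism monoid. -/
noncomputable def scalarU (V : Type) [AddCommGroup V] [Module ℂ V] : ℂˣ →* (V →ₗ[ℂ] V)ˣ where
  toFun c :=
    { val := (c : ℂ) • (LinearMap.id : V →ₗ[ℂ] V)
      inv := ((c⁻¹ : ℂˣ) : ℂ) • (LinearMap.id : V →ₗ[ℂ] V)
      val_inv := by ext x; simp [smul_smul]
      inv_val := by ext x; simp [smul_smul] }
  map_one' := by ext x; simp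
  map_mul' := fun a b => by ext x; simp [smul_smul, mul_comm]

lemma scalarU_comm {V : Type} [AddCommGroup V] [Module ℂ V] (c : ℂˣ) (m : (V →ₗ[ℂ] V)ˣ) :
    scalarU V c * m = m * scalarU V c := by
  ext x
  show ((c : ℂ) • (LinearMap.id : V →ₗ[ℂ] V)) ((m : V →ₗ[ℂ] V) x)
      = (m : V →ₗ[ℂ] V) (((c : ℂ) • (LinearMap.id : V →ₗ[ℂ] V)) x)
  simp

lemma scalarU_inj {V : Type} [AddCommGroup V] [Module ℂ V] [Nontrivial V] :
    Function.Injective (scalarU V) := by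
  intro a b hab
  obtain ⟨x, hx⟩ := exists_ne (0 : V)
  have h1 : (a : ℂ) • x = (b : ℂ) • x := by
    have := congrArg (fun (u : (V →ₗ[ℂ] V)ˣ) => (u : V →ₗ[ℂ] V) x) hab
    exact this
  ext
  exact smul_left_injective ℂ hx h1

lemma det_scalarU {V : Type} [AddCommGroup V] [Module ℂ V] (c : ℂˣ) :
    Units.map (LinearMap.det : (V →ₗ[ℂ] V) →* ℂ) (scalarU V c) = c ^ Module.finrank ℂ V := by
  ext
  show LinearMap.det ((c : ℂ) • (LinearMap.id : V →ₗ[ℂ] V)) = (c : ℂ) ^ Module.finrank ℂ V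
  rw [LinearMap.det_smul, LinearMap.det_id, mul_one]

end Ext1

set_option maxHeartbeats 1600000 in
/-- If `φ ∈ Irr(N)` is `G`-invariant, `φ(1)·o(φ)` is a power of `p`, and `p` does not
divide the order of the Schur multiplier of `G/N`, then `φ` extends to `G`. -/
theorem extends_of_not_dvd_schurMultiplier {G : Type} [Group G] [Finite G]
    (N : Subgroup G) [N.Normal] (p : ℕ) (hp : p.Prime)
    (φ : FDRep ℂ ↥N) (hφ : Simple φ)
    (hinv : ∀ g : G, ∀ n : ↥N, ∀ h : g⁻¹ * ↑n * g ∈ N,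
      φ.character ⟨g⁻¹ * ↑n * g, h⟩ = φ.character n)
    (hpow : ∃ k : ℕ, Module.finrank ℂ φ * charDetOrder φ = p ^ k)
    (hM : ¬ p ∣ Nat.card (schurMultiplier (G ⧸ N))) :
    ∃ χ : FDRep ℂ G, Simple χ ∧ ∀ n : ↥N, χ.character ↑n = φ.character n := by
  classical
  haveI := hφ
  obtain ⟨k, hk⟩ := hpow
  have hnt : Nontrivial (φ : Type) := Ext1.nontrivial_of_simple φ
  have hirr : Ext1.IsIrred φ := Ext1.isIrred_of_simple φ
  -- the section of the quotient map
  let s : G ⧸ N → G := fun q => if q = 1 then 1 else Quotient.out q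
  have hs : ∀ q : G ⧸ N, QuotientGroup.mk (s q) = q := by
    intro q
    by_cases h : q = 1
    · simp only [s, if_pos h, h]; exact QuotientGroup.mk_one _
    · simp only [s, if_neg h]; exact QuotientGroup.out_eq' q
  have hs1 : s 1 = 1 := by simp only [s, if_pos rfl]
  -- the `N`-parts
  have hνmem : ∀ g : G, g * (s (QuotientGroup.mk g))⁻¹ ∈ N := by
    intro g
    rw [← QuotientGroup.eq_one_iff, QuotientGroup.mk_mul, QuotientGroup.mk_inv, hs,
      mul_inv_cancel]
  let ν : G → ↥N := fun g => ⟨g * (s (QuotientGroup.mk g))⁻¹, hνmem g⟩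
  have hν : ∀ g : G, ((ν g : ↥N) : G) = g * (s (QuotientGroup.mk g))⁻¹ := fun g => rfl
  -- conjugation automorphisms of `N`
  have hconjmem : ∀ (g : G) (n : ↥N), g⁻¹ * ↑n * g ∈ N := by
    intro g n
    simpa using Subgroup.Normal.conj_mem ‹N.Normal› _ n.2 g⁻¹
  let cN : G → (↥N →* ↥N) := fun g =>
    { toFun := fun n => ⟨g⁻¹ * ↑n * g, hconjmem g n⟩
      map_one' := by ext; simp
      map_mul' := fun a b => by ext; simp; group }
  have hcN : ∀ (g : G) (n : ↥N), ((cN g n : ↥N) : G) = g⁻¹ * ↑n * g := fun g n => rfl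
  have hcNinv : ∀ (g : G) (m : ↥N), cN g (cN g⁻¹ m) = m := by
    intro g m; ext; simp only [hcN]; group
  have hcNcomp : ∀ (a b : G) (n : ↥N), cN b (cN a n) = cN (a * b) n := by
    intro a b n; ext; simp only [hcN]; group
  -- conjugate representations are simple with the same character
  have hψirr : ∀ g : G, Ext1.IsIrred (Ext1.conjRep φ (cN g)) := by
    intro g W hW
    apply hirr W
    intro n x hx
    have h2 : (Ext1.conjRep φ (cN g)).ρ (cN g⁻¹ n) x ∈ W := hW _ x hx
    rw [Ext1.conjRep_ρ, hcNinv] at h2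
    exact h2
  have hψsimple : ∀ g : G, Simple (Ext1.conjRep φ (cN g)) := fun g =>
    Ext1.simple_of_isIrred _ hnt (hψirr g)
  have hψchar : ∀ (g : G) (n : ↥N), (Ext1.conjRep φ (cN g)).character n = φ.character n := by
    intro g n
    rw [Ext1.conjRep_char]
    exact hinv g n (hconjmem g n)
  have hisoNE : ∀ g : G, Nonempty (φ ≅ Ext1.conjRep φ (cN g)) := by
    intro g
    haveI := hψsimple g
    exact Ext1.iso_of_char_eq (fun n => (hψchar g n).symm)
  -- the projective system of intertwiners
  let T : (G ⧸ N) → ((φ : Type) →ₗ[ℂ] (φ : Type))ˣ := fun q =>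
    if q = 1 then 1 else Ext1.inter (Classical.choice (hisoNE (s q)))
  let ρu : ↥N →* ((φ : Type) →ₗ[ℂ] (φ : Type))ˣ := Representation.asGroupHom φ.ρ
  have hρu : ∀ n : ↥N, ((ρu n : ((φ : Type) →ₗ[ℂ] (φ : Type))ˣ) : ((φ : Type) →ₗ[ℂ] (φ : Type)))
      = φ.ρ n := fun n => Representation.asGroupHom_apply φ.ρ n
  have hT : ∀ (q : G ⧸ N) (m : ↥N), T q * ρu (cN (s q) m) = ρu m * T q := by
    intro q m
    by_cases h : q = 1
    · subst h
      have : cN (s 1) m = m := by ext; rw [hcN, hs1]; group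
      rw [this]
      simp only [T, if_pos rfl, one_mul, mul_one]
    · apply Units.ext
      simp only [T, if_neg h, Units.val_mul, hρu]
      exact Ext1.inter_comm (Classical.choice (hisoNE (s q))) m
  have hν2 : ∀ g : G, ((ν g : ↥N) : G) * s (QuotientGroup.mk g) = g := by
    intro g; rw [hν]; group
  let U : G → ((φ : Type) →ₗ[ℂ] (φ : Type))ˣ := fun g => ρu (ν g) * T (QuotientGroup.mk g)
  have hUdef : ∀ g, U g = ρu (ν g) * T (QuotientGroup.mk g) := fun g => rfl
  -- the factor set
  have hSchur : ∀ q r : G ⧸ N, ∃ c : ℂˣ,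
      T q * T r = Ext1.scalarU (φ : Type) c * (ρu (ν (s q * s r)) * T (q * r)) := by
    intro q r
    have hmk2 : QuotientGroup.mk (s q * s r) = q * r := by
      rw [QuotientGroup.mk_mul, hs, hs]
    have hxd : ((ν (s q * s r) : ↥N) : G) * s (q * r) = s q * s r := by
      have := hν2 (s q * s r); rwa [hmk2] at this
    set A := T q * T r with hA
    set B := ρu (ν (s q * s r)) * T (q * r) with hB
    have hAc : ∀ m : ↥N, A * ρu (cN (s q * s r) m) = ρu m * A := by
      intro m
      have h1 : cN (s q * s r) m = cN (s r) (cN (s q) m) := (hcNcomp _ _ _).symm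
      rw [hA, h1, mul_assoc, hT r, ← mul_assoc, hT q, mul_assoc]
    have hBc : ∀ m : ↥N, B * ρu (cN (s q * s r) m) = ρu m * B := by
      intro m
      have h1 : cN (s q * s r) m = cN (s (q * r)) (cN (↑(ν (s q * s r))) m) := by
        rw [hcNcomp, hxd]
      have h2 : (ν (s q * s r)) * cN (↑(ν (s q * s r))) m = m * ν (s q * s r) := by
        ext
        show ((ν (s q * s r) : ↥N) : G) * ((cN (↑(ν (s q * s r))) m : ↥N) : G)
          = (m : G) * ((ν (s q * s r) : ↥N) : G)
        rw [hcN]; group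
      rw [hB, h1, mul_assoc, hT (q * r), ← mul_assoc, ← map_mul, h2, map_mul, mul_assoc]
    have hDc : ∀ m : ↥N, (A * B⁻¹) * ρu m = ρu m * (A * B⁻¹) := by
      intro m
      have hBc' : B⁻¹ * ρu m = ρu (cN (s q * s r) m) * B⁻¹ := by
        have h := hBc m
        calc B⁻¹ * ρu m = B⁻¹ * (ρu m * B) * B⁻¹ := by group
          _ = B⁻¹ * (B * ρu (cN (s q * s r) m)) * B⁻¹ := by rw [h]
          _ = ρu (cN (s q * s r) m) * B⁻¹ := by group
      rw [mul_assoc, hBc', ← mul_assoc, hAc m, mul_assoc]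
    have hf : ∀ m : ↥N, ((A * B⁻¹ : _) : ((φ : Type) →ₗ[ℂ] (φ : Type))).comp (φ.ρ m)
        = (φ.ρ m).comp ((A * B⁻¹ : _) : ((φ : Type) →ₗ[ℂ] (φ : Type))) := by
      intro m
      have := congrArg Units.val (hDc m)
      simp only [Units.val_mul, hρu] at this
      rw [← Module.End.mul_eq_comp, ← Module.End.mul_eq_comp]
      exact this
    obtain ⟨c, hc⟩ := Ext1.exists_scalar φ _ hf
    have hc0 : c ≠ 0 := by
      intro h0
      rw [h0, zero_smul] at hc
      obtain ⟨x, hx⟩ := exists_ne (0 : (φ : Type))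
      apply hx
      have h1 := congrArg (fun (f : ((φ : Type) →ₗ[ℂ] (φ : Type))) => f x)
        ((A * B⁻¹).val_inv)
      rw [hc] at h1
      simpa using h1.symm
    refine ⟨Units.mk0 c hc0, ?_⟩
    have hAB : A * B⁻¹ = Ext1.scalarU (φ : Type) (Units.mk0 c hc0) := by
      apply Units.ext
      rw [hc]
      rfl
    rw [← hAB]
    group
  choose α hα using hSchur
  -- multiplicativity up to the factor set
  have hU2 : ∀ g h : G, U g * U h =
      Ext1.scalarU (φ : Type) (α (QuotientGroup.mk g) (QuotientGroup.mk h)) * U (g * h) := by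
    intro g h
    have hmk2 : (QuotientGroup.mk (s (QuotientGroup.mk g) * s (QuotientGroup.mk h)) : G ⧸ N)
        = QuotientGroup.mk g * QuotientGroup.mk h := by
      rw [QuotientGroup.mk_mul, hs, hs]
    have hmk3 : (QuotientGroup.mk (g * h) : G ⧸ N)
        = QuotientGroup.mk g * QuotientGroup.mk h := rfl
    have h1 : T (QuotientGroup.mk g) * ρu (ν h)
        = ρu (cN ((s (QuotientGroup.mk g)))⁻¹ (ν h)) * T (QuotientGroup.mk g) := by
      have h2 := hT (QuotientGroup.mk g) (cN ((s (QuotientGroup.mk g)))⁻¹ (ν h))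
      rwa [hcNinv] at h2
    have hne : ν g * (cN ((s (QuotientGroup.mk g)))⁻¹ (ν h))
        * ν ((s (QuotientGroup.mk g)) * (s (QuotientGroup.mk h))) = ν (g * h) := by
      ext
      rw [Subgroup.coe_mul, Subgroup.coe_mul, hν, hcN, hν, hν, hν, hmk2, hmk3]
      group
    calc U g * U h
        = ρu (ν g) * ((T (QuotientGroup.mk g) * ρu (ν h)) * T (QuotientGroup.mk h)) := by
          rw [hUdef, hUdef]; simp only [mul_assoc]
      _ = ρu (ν g) * ((ρu (cN ((s (QuotientGroup.mk g)))⁻¹ (ν h)) * T (QuotientGroup.mk g))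
            * T (QuotientGroup.mk h)) := by rw [h1]
      _ = (ρu (ν g) * ρu (cN ((s (QuotientGroup.mk g)))⁻¹ (ν h)))
            * (T (QuotientGroup.mk g) * T (QuotientGroup.mk h)) := by simp only [mul_assoc]
      _ = (ρu (ν g) * ρu (cN ((s (QuotientGroup.mk g)))⁻¹ (ν h)))
            * (Ext1.scalarU (φ : Type) (α (QuotientGroup.mk g) (QuotientGroup.mk h))
              * (ρu (ν ((s (QuotientGroup.mk g)) * (s (QuotientGroup.mk h))))
                * T (QuotientGroup.mk g * QuotientGroup.mk h))) := by rw [hα]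
      _ = Ext1.scalarU (φ : Type) (α (QuotientGroup.mk g) (QuotientGroup.mk h))
            * ((ρu (ν g) * ρu (cN ((s (QuotientGroup.mk g)))⁻¹ (ν h)))
              * (ρu (ν ((s (QuotientGroup.mk g)) * (s (QuotientGroup.mk h))))
                * T (QuotientGroup.mk g * QuotientGroup.mk h))) := by
          rw [← mul_assoc, ← Ext1.scalarU_comm, mul_assoc]
      _ = Ext1.scalarU (φ : Type) (α (QuotientGroup.mk g) (QuotientGroup.mk h))
            * (ρu (ν g * (cN ((s (QuotientGroup.mk g)))⁻¹ (ν h))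
                * ν ((s (QuotientGroup.mk g)) * (s (QuotientGroup.mk h))))
                * T (QuotientGroup.mk g * QuotientGroup.mk h)) := by
          rw [map_mul, map_mul]; simp only [mul_assoc]
      _ = Ext1.scalarU (φ : Type) (α (QuotientGroup.mk g) (QuotientGroup.mk h))
            * (ρu (ν (g * h)) * T (QuotientGroup.mk (g * h))) := by rw [hne, hmk3]
      _ = Ext1.scalarU (φ : Type) (α (QuotientGroup.mk g) (QuotientGroup.mk h)) * U (g * h) := by
          rw [hUdef]
  -- `U` restricted to `N` is `ρ`
  have hUn : ∀ n : ↥N, U ↑n = ρu n := by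
    intro n
    have h1 : QuotientGroup.mk (n : G) = (1 : G ⧸ N) := (QuotientGroup.eq_one_iff _).mpr n.2
    have h2 : ν ↑n = n := by
      ext
      rw [hν, h1, hs1]
      group
    rw [hUdef, h1, h2]
    simp only [T, if_pos rfl, mul_one]
  have hU1 : U 1 = 1 := by
    have h := hUn 1
    rw [OneMemClass.coe_one] at h
    rw [h, map_one]
  have hα11 : α 1 1 = 1 := by
    apply Ext1.scalarU_inj (V := (φ : Type))
    have h := hU2 1 1
    rw [mul_one, hU1, mul_one, QuotientGroup.mk_one] at h
    rw [map_one]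
    simpa using h.symm
  -- the factor set is a cocycle
  have hcoc : ∀ a b c : G ⧸ N, α a b * α (a * b) c = α b c * α a (b * c) := by
    intro a b c
    apply Ext1.scalarU_inj (V := (φ : Type))
    have h1 := hU2 (s a * s b) (s c)
    have h2 := hU2 (s a) (s b)
    have h3 := hU2 (s b) (s c)
    have h4 := hU2 (s a) (s b * s c)
    have hmka : ∀ q : G ⧸ N, QuotientGroup.mk (s q) = q := hs
    have hmkab : QuotientGroup.mk (s a * s b) = a * b := by rw [QuotientGroup.mk_mul, hs, hs]
    have hmkbc : QuotientGroup.mk (s b * s c) = b * c := by rw [QuotientGroup.mk_mul, hs, hs]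
    rw [hmkab, hmka] at h1
    rw [hmka, hmka] at h2
    rw [hmka, hmka] at h3
    rw [hmka, hmkbc] at h4
    have e1 : (U (s a) * U (s b)) * U (s c)
        = Ext1.scalarU (φ : Type) (α a b * α (a * b) c) * U (s a * s b * s c) := by
      rw [h2, mul_assoc, h1, ← mul_assoc, ← map_mul]
    have e2 : U (s a) * (U (s b) * U (s c))
        = Ext1.scalarU (φ : Type) (α b c * α a (b * c)) * U (s a * (s b * s c)) := by
      rw [h3, ← mul_assoc, ← Ext1.scalarU_comm, mul_assoc, h4, ← mul_assoc, ← map_mul]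
    have e3 : Ext1.scalarU (φ : Type) (α a b * α (a * b) c) * U (s a * s b * s c)
        = Ext1.scalarU (φ : Type) (α b c * α a (b * c)) * U (s a * s b * s c) := by
      rw [← e1, mul_assoc, e2, show s a * (s b * s c) = s a * s b * s c from (mul_assoc _ _ _).symm]
    exact mul_right_cancel e3
  -- determinants
  let Dm : ((φ : Type) →ₗ[ℂ] (φ : Type))ˣ →* ℂˣ :=
    Units.map (LinearMap.det : ((φ : Type) →ₗ[ℂ] (φ : Type)) →* ℂ)
  set d := Module.finrank ℂ (φ : Type) with hd
  set o := charDetOrder φ with ho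
  have hDmS : ∀ c : ℂˣ, Dm (Ext1.scalarU (φ : Type) c) = c ^ d := fun c => Ext1.det_scalarU c
  have hdeto : ∀ n : ↥N, (Dm (ρu n)) ^ o = 1 := by
    intro n
    have h1 := pow_orderOf_eq_one
      ((LinearMap.det : ((φ : Type) →ₗ[ℂ] (φ : Type)) →* ℂ).comp φ.ρ)
    have h2 : (LinearMap.det (φ.ρ n)) ^ o = 1 := by
      have h3 := congrFun (congrArg (fun (f : ↥N →* ℂ) => (f : ↥N → ℂ)) h1) n
      simp only [MonoidHom.pow_apply, MonoidHom.comp_apply, MonoidHom.one_apply] at h3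
      exact h3
    apply Units.ext
    rw [Units.val_pow_eq_pow_val]
    have h4 : ((Dm (ρu n) : ℂˣ) : ℂ) = LinearMap.det (φ.ρ n) := by
      show ((Units.map (LinearMap.det : ((φ : Type) →ₗ[ℂ] (φ : Type)) →* ℂ) (ρu n) : ℂˣ) : ℂ)
        = LinearMap.det (φ.ρ n)
      rw [Units.coe_map]
      exact congrArg LinearMap.det (hρu n)
    rw [h4, h2]
    rfl
  let e : G ⧸ N → ℂˣ := fun q => Dm (T q)
  have hE4 : ∀ q r : G ⧸ N, e q * e r
      = (α q r) ^ d * (Dm (ρu (ν (s q * s r))) * e (q * r)) := by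
    intro q r
    have h1 := congrArg Dm (hα q r)
    simp only [map_mul] at h1
    rw [hDmS] at h1
    exact h1
  have hcb : ∀ q r : G ⧸ N, (α q r) ^ (p ^ k)
      = (e q) ^ o * (e r) ^ o * ((e (q * r)) ^ o)⁻¹ := by
    intro q r
    have h1 := congrArg (· ^ o) (hE4 q r)
    simp only [mul_pow] at h1
    rw [hdeto, one_mul, ← pow_mul, hk] at h1
    rw [h1, mul_inv_cancel_right]
  -- the class of the factor set is trivial
  let β : (G ⧸ N) × (G ⧸ N) → ℂˣ := fun x => α x.1 x.2
  have hβ : β ∈ twoCocycles (G ⧸ N) := fun a b c => hcoc a b c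
  have hβcb : β ∈ twoCoboundaries (G ⧸ N) := by
    set βz : ↥(twoCocycles (G ⧸ N)) := ⟨β, hβ⟩ with hβz
    have hx1 : (QuotientGroup.mk βz : schurMultiplier (G ⧸ N)) ^ (p ^ k) = 1 := by
      rw [← QuotientGroup.mk_pow, QuotientGroup.eq_one_iff, Subgroup.mem_subgroupOf]
      refine ⟨fun q => (e q) ^ o, fun a b => ?_⟩
      show ((βz ^ (p ^ k) : ↥(twoCocycles (G ⧸ N))) : (G ⧸ N) × (G ⧸ N) → ℂˣ) (a, b)
        = (e a) ^ o * (e b) ^ o * ((e (a * b)) ^ o)⁻¹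
      rw [SubmonoidClass.coe_pow, Pi.pow_apply]
      exact hcb a b
    have hfin : Finite (schurMultiplier (G ⧸ N)) := by
      apply Nat.finite_of_card_ne_zero
      intro h0
      exact hM (h0 ▸ dvd_zero p)
    have hx2 : (QuotientGroup.mk βz : schurMultiplier (G ⧸ N))
        ^ Nat.card (schurMultiplier (G ⧸ N)) = 1 := pow_card_eq_one'
    have hco : Nat.Coprime (p ^ k) (Nat.card (schurMultiplier (G ⧸ N))) :=
      Nat.Coprime.pow_left k ((Nat.Prime.coprime_iff_not_dvd hp).mpr hM)
    have hxord : orderOf (QuotientGroup.mk βz : schurMultiplier (G ⧸ N)) = 1 := by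
      have h1 := orderOf_dvd_of_pow_eq_one hx1
      have h2 := orderOf_dvd_of_pow_eq_one hx2
      exact Nat.dvd_one.mp (hco ▸ Nat.dvd_gcd h1 h2)
    have h1 : (QuotientGroup.mk βz : schurMultiplier (G ⧸ N)) = 1 := orderOf_eq_one_iff.mp hxord
    rw [QuotientGroup.eq_one_iff, Subgroup.mem_subgroupOf] at h1
    exact h1
  obtain ⟨cb, hcbf⟩ := hβcb
  have hcbα : ∀ q r : G ⧸ N, α q r = cb q * cb r * (cb (q * r))⁻¹ := fun q r => hcbf q r
  have hcb1 : cb 1 = 1 := by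
    have h1 := hcbα 1 1
    rw [hα11, one_mul, mul_inv_cancel_right] at h1
    exact h1.symm
  -- the extension as a homomorphism into units
  have hWmul : ∀ g h : G,
      ((Ext1.scalarU (φ : Type) (cb (QuotientGroup.mk g)))⁻¹ * U g)
      * ((Ext1.scalarU (φ : Type) (cb (QuotientGroup.mk h)))⁻¹ * U h)
      = (Ext1.scalarU (φ : Type) (cb (QuotientGroup.mk (g * h))))⁻¹ * U (g * h) := by
    intro g h
    have hmk3 : (QuotientGroup.mk (g * h) : G ⧸ N)
        = QuotientGroup.mk g * QuotientGroup.mk h := rfl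
    have hsc : ∀ (z : ℂˣ) (m : ((φ : Type) →ₗ[ℂ] (φ : Type))ˣ),
        (Ext1.scalarU (φ : Type) z)⁻¹ * m = m * (Ext1.scalarU (φ : Type) z)⁻¹ := by
      intro z m
      rw [← map_inv, Ext1.scalarU_comm]
    have hα' : (cb (QuotientGroup.mk g))⁻¹ * ((cb (QuotientGroup.mk h))⁻¹
        * α (QuotientGroup.mk g) (QuotientGroup.mk h))
        = (cb (QuotientGroup.mk g * QuotientGroup.mk h))⁻¹ := by
      rw [hcbα]
      apply Units.ext
      simp only [Units.val_mul, Units.val_inv_eq_inv_val]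
      field_simp
    calc (Ext1.scalarU (φ : Type) (cb (QuotientGroup.mk g)))⁻¹ * U g
          * ((Ext1.scalarU (φ : Type) (cb (QuotientGroup.mk h)))⁻¹ * U h)
        = (Ext1.scalarU (φ : Type) (cb (QuotientGroup.mk g)))⁻¹
          * ((Ext1.scalarU (φ : Type) (cb (QuotientGroup.mk h)))⁻¹ * (U g * U h)) := by
          rw [mul_assoc ((Ext1.scalarU (φ : Type) (cb (QuotientGroup.mk g)))⁻¹) (U g),
            ← mul_assoc (U g), ← hsc (cb (QuotientGroup.mk h)) (U g)]
          simp only [mul_assoc]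
      _ = (Ext1.scalarU (φ : Type) (cb (QuotientGroup.mk g)))⁻¹
          * ((Ext1.scalarU (φ : Type) (cb (QuotientGroup.mk h)))⁻¹
            * (Ext1.scalarU (φ : Type) (α (QuotientGroup.mk g) (QuotientGroup.mk h))
              * U (g * h))) := by rw [hU2]
      _ = Ext1.scalarU (φ : Type) ((cb (QuotientGroup.mk g))⁻¹
            * ((cb (QuotientGroup.mk h))⁻¹ * α (QuotientGroup.mk g) (QuotientGroup.mk h)))
          * U (g * h) := by
          simp only [map_mul, map_inv, mul_assoc]
      _ = (Ext1.scalarU (φ : Type) (cb (QuotientGroup.mk (g * h))))⁻¹ * U (g * h) := by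
          rw [hα', hmk3, map_inv]
  let Wh : G →* ((φ : Type) →ₗ[ℂ] (φ : Type))ˣ := MonoidHom.mk'
    (fun g => (Ext1.scalarU (φ : Type) (cb (QuotientGroup.mk g)))⁻¹ * U g)
    (fun a b => (hWmul a b).symm)
  let ρ'' : Representation ℂ G (φ : Type) :=
    (Units.coeHom ((φ : Type) →ₗ[ℂ] (φ : Type))).comp Wh
  have hρ''n : ∀ n : ↥N, ρ'' ↑n = φ.ρ n := by
    intro n
    have h1 : (QuotientGroup.mk (n : G) : G ⧸ N) = 1 := (QuotientGroup.eq_one_iff _).mpr n.2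
    show (((Ext1.scalarU (φ : Type) (cb (QuotientGroup.mk (n : G))))⁻¹ * U ↑n :
      ((φ : Type) →ₗ[ℂ] (φ : Type))ˣ) : ((φ : Type) →ₗ[ℂ] (φ : Type))) = φ.ρ n
    rw [h1, hcb1, map_one, inv_one, one_mul, hUn]
    exact hρu n
  refine ⟨FDRep.of ρ'', ?_, ?_⟩
  · -- simplicity
    refine Ext1.simple_of_isIrred _ hnt ?_
    intro W hW
    apply hirr W
    intro n x hx
    have h2 : (FDRep.of ρ'').ρ ↑n x ∈ W := hW (↑n) x hx
    have h3 : (FDRep.of ρ'').ρ ↑n = φ.ρ n := hρ''n n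
    rwa [h3] at h2
  · -- the character restricts correctly
    intro n
    show LinearMap.trace ℂ (φ : Type) ((FDRep.of ρ'').ρ ↑n)
      = LinearMap.trace ℂ (φ : Type) (φ.ρ n)
    exact congrArg (LinearMap.trace ℂ (φ : Type)) (hρ''n n)
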